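/- arXiv:2203.15717 — 6 statements merged into one kernel-verified Lean document; each statement's English description precedes it below -/
import Mathlib

section
/- Discrete Girsanov identity on the directed triangular lattice (Lemma 2.3 of the paper): Let δ > 0 and let c₁, c₂, c₃ : ℂ → ℝ be functions with 1 + c_k(v)·δ > 0 for every v ∈ ℂ and k ∈ {1,2,3}. For every path γ = (x₀, x₁, …, xₙ) of length n in the directed triangular lattice of mesh δ, one has ∏_{s=0}^{n−1} a_{k_s}(x_s)/a(x_s) = 3^{−n} · exp(Mₙ − ½·Vₙ), where k_s ∈ {1,2,3} is the unique index with x_{s+1} − x_s = δ·τ^{k_s−1}, Mₙ = (2/3)·Σ_{s=0}^{n−1} ⟨α(x_s), x_{s+1} − x_s⟩ and Vₙ = (2/3)·δ²·Σ_{s=0}^{n−1} β(x_s)². -/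
open Finset

/-- The primitive third root of unity `τ = e^{2πi/3}`. -/
noncomputable def triTau : ℂ := Complex.exp (2 * Real.pi * Complex.I / 3)

/-- The real inner product `⟨z, w⟩ = Re (z · conj w)` on `ℂ`. -/
noncomputable def cinner (z w : ℂ) : ℝ := (z * (starRingEnd ℂ) w).re

lemma tau_def : triTau = ⟨-1/2, Real.sqrt 3 / 2⟩ := by
  have h : (2 * (Real.pi:ℂ) * Complex.I / 3) = ((2 * Real.pi / 3 : ℝ) : ℂ) * Complex.I := by
    push_cast; ring
  have hc : Real.cos (2 * Real.pi / 3) = -(1/2) := by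
    have : 2 * Real.pi / 3 = Real.pi - Real.pi / 3 := by ring
    rw [this, Real.cos_pi_sub, Real.cos_pi_div_three]
  have hs : Real.sin (2 * Real.pi / 3) = Real.sqrt 3 / 2 := by
    have : 2 * Real.pi / 3 = Real.pi - Real.pi / 3 := by ring
    rw [this, Real.sin_pi_sub, Real.sin_pi_div_three]
  rw [triTau, h]
  apply Complex.ext
  · rw [Complex.exp_ofReal_mul_I_re, hc]; norm_num
  · rw [Complex.exp_ofReal_mul_I_im, hs]


lemma girsanov_step (δ : ℝ) (hδ : 0 < δ) (c : Fin 3 → ℂ → ℝ)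
    (hc : ∀ k v, 0 < 1 + c k v * δ) (v : ℂ) (kk : Fin 3)
    (a : ℂ → ℝ) (ha : ∀ v, a v = ∑ j : Fin 3, (1 + c j v * δ))
    (α : ℂ → ℂ)
    (hα : ∀ v, α v = ∑ j : Fin 3, ((δ⁻¹ * Real.log (1 + c j v * δ) : ℝ) : ℂ) * triTau ^ (j : ℕ))
    (β : ℂ → ℝ)
    (hβ : ∀ v, Real.exp (-(δ ^ 2) * (β v) ^ 2)
        = (a v / 3) ^ (-(3 : ℤ)) * ∏ j : Fin 3, (1 + c j v * δ)) :
    (1 + c kk v * δ) / a v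
      = (1/3) * Real.exp ((2/3) * cinner (α v) ((δ : ℂ) * triTau ^ (kk : ℕ))
          - (1/3) * δ^2 * (β v)^2) := by
  set L : Fin 3 → ℝ := fun j => Real.log (1 + c j v * δ) with hL
  have hδ' : δ ≠ 0 := ne_of_gt hδ
  have hav : 0 < a v := by
    rw [ha, Fin.sum_univ_three]
    have := hc 0 v; have := hc 1 v; have := hc 2 v; linarith
  -- inner product computation
  have hC : cinner (α v) ((δ : ℂ) * triTau ^ (kk : ℕ))
      = (3/2) * L kk - (1/2) * (L 0 + L 1 + L 2) := by
    rw [hα, Fin.sum_univ_three]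
    have h3 : Real.sqrt 3 ^ 2 = 3 := Real.sq_sqrt (by norm_num)
    simp only [hL]
    fin_cases kk <;>
      simp only [cinner, tau_def, Fin.isValue, Fin.val_zero, Fin.val_one, Fin.val_two,
          pow_zero, pow_one, pow_two] <;>
      simp [Complex.ext_iff, Complex.mul_re, Complex.mul_im, Complex.add_re, Complex.add_im] <;>
      field_simp <;>
      ring_nf <;>
      simp only [h3, show Real.sqrt 3 ^ 4 = 9 by rw [show (4:ℕ) = 2 * 2 from rfl, pow_mul, h3]; norm_num] <;>
      ring
  -- variance computation
  have hV : δ^2 * (β v)^2 = 3 * Real.log (a v / 3) - (L 0 + L 1 + L 2) := by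
    have h1 := hβ v
    have h2 : Real.log (Real.exp (-(δ ^ 2) * (β v) ^ 2))
        = Real.log ((a v / 3) ^ (-(3 : ℤ)) * ∏ j : Fin 3, (1 + c j v * δ)) := by rw [h1]
    rw [Real.log_exp] at h2
    have hpos : (0:ℝ) < (a v / 3) ^ (-(3:ℤ)) := zpow_pos (by linarith) _
    have hprodpos : (0:ℝ) < ∏ j : Fin 3, (1 + c j v * δ) :=
      Finset.prod_pos (fun j _ => hc j v)
    rw [Real.log_mul (ne_of_gt hpos) (ne_of_gt hprodpos), Real.log_zpow,
        Real.log_prod (fun j _ => ne_of_gt (hc j v)), Fin.sum_univ_three] at h2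
    push_cast at h2
    linarith
  rw [hC]
  have key : (2/3) * ((3/2) * L kk - (1/2) * (L 0 + L 1 + L 2))
      - (1/3) * δ^2 * (β v)^2 = L kk - Real.log (a v / 3) := by
    linarith [hV]
  rw [key, Real.exp_sub, hL]
  rw [Real.exp_log (hc kk v), Real.exp_log (by linarith : (0:ℝ) < a v / 3)]
  field_simp


/-- **Discrete Girsanov identity on the directed triangular lattice** (Lemma 2.3).
For a path `x₀, …, xₙ` in the directed triangular lattice of mesh `δ` with step
directions `τ^{k_s}`, the product of the drifted transition probabilities
`a_{k_s}(x_s)/a(x_s)` equals `3^{-n} · exp(Mₙ - ½ Vₙ)`. -/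
theorem discrete_girsanov_triangular
    (δ : ℝ) (hδ : 0 < δ)
    (c : Fin 3 → ℂ → ℝ)
    (hc : ∀ k v, 0 < 1 + c k v * δ)
    (n : ℕ) (x : ℕ → ℂ) (k : ℕ → Fin 3)
    (hpath : ∀ s < n, x (s + 1) - x s = (δ : ℂ) * triTau ^ (k s : ℕ))
    (a : ℂ → ℝ) (ha : ∀ v, a v = ∑ j : Fin 3, (1 + c j v * δ))
    (α : ℂ → ℂ)
    (hα : ∀ v, α v = ∑ j : Fin 3, ((δ⁻¹ * Real.log (1 + c j v * δ) : ℝ) : ℂ) * triTau ^ (j : ℕ))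
    (β : ℂ → ℝ) (hβpos : ∀ v, 0 ≤ β v)
    (hβ : ∀ v, Real.exp (-(δ ^ 2) * (β v) ^ 2)
        = (a v / 3) ^ (-(3 : ℤ)) * ∏ j : Fin 3, (1 + c j v * δ)) :
    ∏ s ∈ Finset.range n, (1 + c (k s) (x s) * δ) / a (x s)
      = (3 : ℝ) ^ (-(n : ℤ)) * Real.exp
          ((2 / 3) * ∑ s ∈ Finset.range n, cinner (α (x s)) (x (s + 1) - x s)
            - (1 / 2) * ((2 / 3) * δ ^ 2 * ∑ s ∈ Finset.range n, (β (x s)) ^ 2)) := by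
  have key : ∀ s ∈ Finset.range n, (1 + c (k s) (x s) * δ) / a (x s)
      = (1/3) * Real.exp ((2/3) * cinner (α (x s)) (x (s + 1) - x s)
          - (1/3) * δ^2 * (β (x s))^2) := by
    intro s hs
    rw [hpath s (Finset.mem_range.mp hs)]
    exact girsanov_step δ hδ c hc (x s) (k s) a ha α hα β hβ
  rw [Finset.prod_congr rfl key, Finset.prod_mul_distrib, Finset.prod_const,
      ← Real.exp_sum]
  congr 1
  · rw [zpow_neg, zpow_natCast, div_pow, one_pow, one_div, Finset.card_range]
  · congr 1
    rw [Finset.sum_sub_distrib, ← Finset.mul_sum]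
    have : ∑ s ∈ Finset.range n, (1/3) * δ^2 * (β (x s))^2
        = (1/3) * δ^2 * ∑ s ∈ Finset.range n, (β (x s))^2 := by
      rw [Finset.mul_sum]
    rw [this]; ring
end

section
/- Exact correspondence between the drifted and the massive walk on the directed triangular lattice (Corollary 2.4 of the paper): Let δ > 0 and let c₁, c₂, c₃ ∈ ℝ be constants with a_k = 1 + c_k·δ > 0 for k = 1,2,3 and a = a₁ + a₂ + a₃. Then for every path γ = (x₀, x₁, …, xₙ) of length n in the directed triangular lattice of mesh δ, ∏_{s=0}^{n−1} a_{k_s}/a = ((a₁·a₂·a₃)^{1/3}/a)ⁿ · exp((2/3)·⟨α, xₙ − x₀⟩), where k_s ∈ {1,2,3} is the unique index with x_{s+1} − x_s = δ·τ^{k_s−1}. In particular the ratio of the drifted path weight ∏_{s} a_{k_s}/a to the massive path weight ((a₁·a₂·a₃)^{1/3}/a)ⁿ depends only on the endpoints x₀ and xₙ of the path and not on the path itself. -/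
open Finset

lemma triTau_re : triTau.re = -(1/2) := by
  have : triTau = Complex.exp ((2 * Real.pi / 3 : ℝ) * Complex.I) := by
    unfold triTau; push_cast; ring_nf
  rw [this, Complex.exp_ofReal_mul_I_re]
  have : (2 * Real.pi / 3 : ℝ) = Real.pi - Real.pi/3 := by ring
  rw [this, Real.cos_pi_sub, Real.cos_pi_div_three]

lemma triTau_im : triTau.im = Real.sqrt 3 / 2 := by
  have : triTau = Complex.exp ((2 * Real.pi / 3 : ℝ) * Complex.I) := by
    unfold triTau; push_cast; ring_nf
  rw [this, Complex.exp_ofReal_mul_I_im]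
  have : (2 * Real.pi / 3 : ℝ) = Real.pi - Real.pi/3 := by ring
  rw [this, Real.sin_pi_sub, Real.sin_pi_div_three]

/-- The inner-product table: `⟨τʲ, τˡ⟩ = 1` if `j = l` and `-1/2` otherwise. -/
lemma tab (j l : Fin 3) :
    (triTau ^ (j:ℕ) * (starRingEnd ℂ) (triTau ^ (l:ℕ))).re = if j = l then 1 else -(1/2) := by
  have h3 : Real.sqrt 3 * Real.sqrt 3 = 3 := Real.mul_self_sqrt (by norm_num)
  fin_cases j <;> fin_cases l <;>
    simp [pow_succ, Complex.mul_re, Complex.mul_im, Complex.conj_re, Complex.conj_im,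
      triTau_re, triTau_im] <;> ring_nf <;> nlinarith [h3]

lemma cinner_add_right (z w₁ w₂ : ℂ) : cinner z (w₁ + w₂) = cinner z w₁ + cinner z w₂ := by
  simp [cinner, mul_add]

lemma cinner_zero_right (z : ℂ) : cinner z 0 = 0 := by simp [cinner]

lemma cinner_sum_left {ι : Type*} (s : Finset ι) (f : ι → ℂ) (w : ℂ) :
    cinner (∑ i ∈ s, f i) w = ∑ i ∈ s, cinner (f i) w := by
  simp [cinner, Finset.sum_mul, Complex.re_sum]

/-- **Exact correspondence between the drifted and the massive walk on the directed
triangular lattice** (Corollary 2.4). For constant weights `a_k = 1 + c_k δ`, the drifted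
path weight `∏ a_{k_s}/a` equals the massive path weight `((a₁a₂a₃)^{1/3}/a)ⁿ` times
`exp((2/3)⟨α, xₙ - x₀⟩)`, which depends only on the endpoints of the path. -/
theorem drifted_eq_massive_times_endpoint_factor
    (δ : ℝ) (hδ : 0 < δ)
    (c : Fin 3 → ℝ) (hc : ∀ k, 0 < 1 + c k * δ)
    (n : ℕ) (x : ℕ → ℂ) (k : ℕ → Fin 3)
    (hpath : ∀ s < n, x (s + 1) - x s = (δ : ℂ) * triTau ^ (k s : ℕ)) :
    ∏ s ∈ Finset.range n, (1 + c (k s) * δ) / (∑ j : Fin 3, (1 + c j * δ))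
      = ((∏ j : Fin 3, (1 + c j * δ)) ^ ((1 : ℝ) / 3) / (∑ j : Fin 3, (1 + c j * δ))) ^ n
        * Real.exp ((2 / 3) *
            cinner (∑ j : Fin 3, ((δ⁻¹ * Real.log (1 + c j * δ) : ℝ) : ℂ) * triTau ^ (j : ℕ))
              (x n - x 0)) := by
  set A : ℝ := ∑ j : Fin 3, (1 + c j * δ) with hA
  set P : ℝ := ∏ j : Fin 3, (1 + c j * δ) with hP
  set α : ℂ := ∑ j : Fin 3, ((δ⁻¹ * Real.log (1 + c j * δ) : ℝ) : ℂ) * triTau ^ (j : ℕ) with hα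
  have hPpos : 0 < P := Finset.prod_pos fun j _ => hc j
  have hlogP : Real.log P = ∑ j : Fin 3, Real.log (1 + c j * δ) :=
    Real.log_prod (fun j _ => (hc j).ne')
  have hProot : P ^ ((1:ℝ)/3) = Real.exp ((1/3) * ∑ j : Fin 3, Real.log (1 + c j * δ)) := by
    rw [Real.rpow_def_of_pos hPpos, hlogP]; exact congrArg Real.exp (mul_comm _ _)
  -- key step identity
  have step : ∀ m : Fin 3,
      (1 + c m * δ) / A
        = (P ^ ((1:ℝ)/3) / A) * Real.exp ((2/3) * cinner α ((δ:ℂ) * triTau ^ (m:ℕ))) := by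
    intro m
    have hci : cinner α ((δ:ℂ) * triTau ^ (m:ℕ))
        = ∑ j : Fin 3, (δ⁻¹ * Real.log (1 + c j * δ)) * (δ * (if j = m then 1 else -(1/2))) := by
      rw [hα, cinner_sum_left]
      refine Finset.sum_congr rfl fun j _ => ?_
      rw [← tab j m]
      simp [cinner, Complex.mul_re, Complex.mul_im]
      ring
    have hci2 : cinner α ((δ:ℂ) * triTau ^ (m:ℕ))
        = ∑ j : Fin 3, Real.log (1 + c j * δ) * (if j = m then 1 else -(1/2)) := by
      rw [hci]; refine Finset.sum_congr rfl fun j _ => ?_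
      field_simp
    have hsum : (2/3 : ℝ) * cinner α ((δ:ℂ) * triTau ^ (m:ℕ))
        = Real.log (1 + c m * δ) - (1/3) * ∑ j : Fin 3, Real.log (1 + c j * δ) := by
      rw [hci2]
      rw [Fin.sum_univ_three, Fin.sum_univ_three]
      fin_cases m <;> simp <;> ring
    rw [hsum, Real.exp_sub, Real.exp_log (hc m), hProot, div_mul_div_comm,
      mul_comm (Real.exp _) (1 + c m * δ), mul_div_mul_right _ _ (Real.exp_ne_zero _)]
  induction n with
  | zero => simp [cinner_zero_right]
  | succ n ih =>
    have hpath' : ∀ s < n, x (s + 1) - x s = (δ : ℂ) * triTau ^ (k s : ℕ) :=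
      fun s hs => hpath s (Nat.lt_succ_of_lt hs)
    rw [Finset.prod_range_succ, ih hpath', step (k n)]
    have hx : x (n+1) - x 0 = ((δ:ℂ) * triTau ^ (k n : ℕ)) + (x n - x 0) := by
      rw [← hpath n (Nat.lt_succ_self n)]; ring
    rw [hx, cinner_add_right, mul_add, Real.exp_add, pow_succ]
    ring
end

section
/- Discrete Girsanov identity on the square lattice (Lemma 2.9 of the paper): Let δ > 0 and let c₁, c₂, c₃, c₄ : ℂ → ℝ be functions with 1 + c_k(v)·δ > 0 for every v and k, and satisfying c₁(v) + c₃(v) = c₂(v) + c₄(v) for every v. For every path γ = (x₀, x₁, …, xₙ) of length n in the square lattice of mesh δ, one has ∏_{s=0}^{n−1} a_{k_s}(x_s)/a(x_s) = 4^{−n} · exp(Mₙ − ½·Vₙ), where k_s ∈ {1,2,3,4} is the unique index with x_{s+1} − x_s = δ·i^{k_s−1}, Mₙ = (1/2)·Σ_{s=0}^{n−1} ⟨α(x_s), x_{s+1} − x_s⟩, and Vₙ = Σ_{s=0}^{n−1} [β₁(x_s)²·(Re(x_{s+1} − x_s))² + β₂(x_s)²·(Im(x_{s+1} − x_s))²].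 -/
open Finset

lemma exp_calc (δ : ℝ) (hδ : 0 < δ) (p q A : ℝ) (hp : 0 < p) (hq : 0 < q) (hA : 0 < A) :
    p / A = 1/4 * Real.exp ((1/2) * ((δ⁻¹ * Real.log p - δ⁻¹ * Real.log q) * δ)
      - (1/2) * (-(Real.log (p * q / (A/4)^2)))) := by
  have hA4 : 0 < A / 4 := by linarith
  have h1 : (δ⁻¹ * Real.log p - δ⁻¹ * Real.log q) * δ = Real.log p - Real.log q := by
    field_simp
  rw [h1, Real.log_div (by positivity) (by positivity), Real.log_mul hp.ne' hq.ne',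
    Real.log_pow]
  have h2 : (1/2) * (Real.log p - Real.log q)
      - (1/2) * (-(Real.log p + Real.log q - (2:ℕ) * Real.log (A/4)))
      = Real.log p - Real.log (A/4) := by push_cast; ring
  rw [h2, Real.exp_sub, Real.exp_log hp, Real.exp_log hA4]
  field_simp

lemma cinner_real (z : ℂ) (d : ℝ) : cinner z (d : ℂ) = z.re * d := by
  simp [cinner, Complex.conj_ofReal, Complex.mul_re]

lemma cinner_real_I (z : ℂ) (d : ℝ) : cinner z ((d : ℂ) * Complex.I) = z.im * d := by
  simp [cinner, Complex.mul_re, Complex.mul_im]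

/-- **Discrete Girsanov identity on the square lattice** (Lemma 2.9).
For a path `x₀, …, xₙ` in the square lattice of mesh `δ` with step directions `i^{k_s}`,
under the balance condition `c₁ + c₃ = c₂ + c₄`, the product of the drifted transition
probabilities `a_{k_s}(x_s)/a(x_s)` equals `4^{-n} · exp(Mₙ - ½ Vₙ)`. -/
theorem discrete_girsanov_square
    (δ : ℝ) (hδ : 0 < δ)
    (c : Fin 4 → ℂ → ℝ)
    (hc : ∀ k v, 0 < 1 + c k v * δ)
    (hbal : ∀ v, c 0 v + c 2 v = c 1 v + c 3 v)
    (n : ℕ) (x : ℕ → ℂ) (k : ℕ → Fin 4)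
    (hpath : ∀ s < n, x (s + 1) - x s = (δ : ℂ) * Complex.I ^ (k s : ℕ))
    (a : ℂ → ℝ) (ha : ∀ v, a v = ∑ j : Fin 4, (1 + c j v * δ))
    (α : ℂ → ℂ)
    (hα : ∀ v, α v = ∑ j : Fin 4,
        ((δ⁻¹ * Real.log (1 + c j v * δ) : ℝ) : ℂ) * Complex.I ^ (j : ℕ))
    (β₁ β₂ : ℂ → ℝ) (hβ₁pos : ∀ v, 0 ≤ β₁ v) (hβ₂pos : ∀ v, 0 ≤ β₂ v)
    (hβ₁ : ∀ v, Real.exp (-(δ ^ 2) * (β₁ v) ^ 2)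
        = (1 + c 0 v * δ) * (1 + c 2 v * δ) / (a v / 4) ^ 2)
    (hβ₂ : ∀ v, Real.exp (-(δ ^ 2) * (β₂ v) ^ 2)
        = (1 + c 1 v * δ) * (1 + c 3 v * δ) / (a v / 4) ^ 2) :
    ∏ s ∈ Finset.range n, (1 + c (k s) (x s) * δ) / a (x s)
      = (4 : ℝ) ^ (-(n : ℤ)) * Real.exp
          ((1 / 2) * ∑ s ∈ Finset.range n, cinner (α (x s)) (x (s + 1) - x s)
            - (1 / 2) * ∑ s ∈ Finset.range n,
                ((β₁ (x s)) ^ 2 * (x (s + 1) - x s).re ^ 2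
                  + (β₂ (x s)) ^ 2 * (x (s + 1) - x s).im ^ 2)) := by
  set f : ℕ → ℝ := fun s => (1/2) * cinner (α (x s)) (x (s + 1) - x s)
    - (1/2) * ((β₁ (x s)) ^ 2 * (x (s + 1) - x s).re ^ 2
        + (β₂ (x s)) ^ 2 * (x (s + 1) - x s).im ^ 2) with hf
  have hstep : ∀ s ∈ Finset.range n,
      (1 + c (k s) (x s) * δ) / a (x s) = 1/4 * Real.exp (f s) := by
    intro s hs
    have hsn := Finset.mem_range.mp hs
    set v := x s with hv
    have hA : 0 < a v := by
      rw [ha]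
      have := hc 0 v; have := hc 1 v; have := hc 2 v; have := hc 3 v
      rw [Fin.sum_univ_four]; linarith
    have hl1 : (β₁ v)^2 * δ^2 = -(Real.log ((1 + c 0 v * δ) * (1 + c 2 v * δ) / (a v / 4)^2)) := by
      rw [← hβ₁ v, Real.log_exp]; ring
    have hl2 : (β₂ v)^2 * δ^2 = -(Real.log ((1 + c 1 v * δ) * (1 + c 3 v * δ) / (a v / 4)^2)) := by
      rw [← hβ₂ v, Real.log_exp]; ring
    rw [hf]
    simp only [hpath s hsn, ← hv]
    rw [show x (s + 1) - v = (δ : ℂ) * Complex.I ^ (k s : ℕ) from hpath s hsn]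
    have hαre : (α v).re = δ⁻¹ * Real.log (1 + c 0 v * δ) - δ⁻¹ * Real.log (1 + c 2 v * δ) := by
      rw [hα]
      simp [Fin.sum_univ_four, show ((3:Fin 4):ℕ) = 3 from rfl, pow_succ, Complex.mul_re]
      ring
    have hαim : (α v).im = δ⁻¹ * Real.log (1 + c 1 v * δ) - δ⁻¹ * Real.log (1 + c 3 v * δ) := by
      rw [hα]
      simp [Fin.sum_univ_four, show ((3:Fin 4):ℕ) = 3 from rfl, pow_succ, Complex.mul_im]
      ring
    have hfour : ∀ κ : Fin 4, κ = 0 ∨ κ = 1 ∨ κ = 2 ∨ κ = 3 := by decide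
    rcases hfour (k s) with hk | hk | hk | hk <;> rw [hk]
    · rw [show ((δ:ℂ) * Complex.I ^ (((0:Fin 4)):ℕ)) = ((δ:ℝ):ℂ) by norm_num]
      rw [exp_calc δ hδ (1 + c 0 v * δ) (1 + c 2 v * δ) (a v) (hc 0 v) (hc 2 v) hA]
      congr 1
      rw [cinner_real, hαre, Complex.ofReal_re, Complex.ofReal_im, ← hl1]
      ring
    · rw [show ((δ:ℂ) * Complex.I ^ (((1:Fin 4)):ℕ)) = ((δ:ℝ):ℂ) * Complex.I by norm_num]
      rw [exp_calc δ hδ (1 + c 1 v * δ) (1 + c 3 v * δ) (a v) (hc 1 v) (hc 3 v) hA]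
      congr 1
      rw [cinner_real_I, hαim]
      simp only [Complex.mul_re, Complex.mul_im, Complex.I_re, Complex.I_im,
        Complex.ofReal_re, Complex.ofReal_im]
      rw [← hl2]
      ring
    · rw [show ((δ:ℂ) * Complex.I ^ (((2:Fin 4)):ℕ)) = (((-δ:ℝ)):ℂ) by
        push_cast; norm_num [show ((2:Fin 4):ℕ) = 2 from rfl, Complex.I_sq]]
      rw [exp_calc δ hδ (1 + c 2 v * δ) (1 + c 0 v * δ) (a v) (hc 2 v) (hc 0 v) hA]
      congr 1
      rw [cinner_real, hαre, Complex.ofReal_re, Complex.ofReal_im,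
        mul_comm (1 + c 2 v * δ) (1 + c 0 v * δ), ← hl1]
      ring
    · rw [show ((δ:ℂ) * Complex.I ^ (((3:Fin 4)):ℕ)) = (((-δ:ℝ)):ℂ) * Complex.I by
        push_cast; rw [show ((3:Fin 4):ℕ) = 3 from rfl, pow_succ, Complex.I_sq]; ring]
      rw [exp_calc δ hδ (1 + c 3 v * δ) (1 + c 1 v * δ) (a v) (hc 3 v) (hc 1 v) hA]
      congr 1
      rw [cinner_real_I, hαim]
      simp only [Complex.mul_re, Complex.mul_im, Complex.I_re, Complex.I_im,
        Complex.ofReal_re, Complex.ofReal_im]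
      rw [mul_comm (1 + c 3 v * δ) (1 + c 1 v * δ), ← hl2]
      ring
  rw [Finset.prod_congr rfl hstep, Finset.prod_mul_distrib, Finset.prod_const,
    ← Real.exp_sum]
  congr 1
  · rw [zpow_neg, zpow_natCast, ← inv_pow]
    norm_num
  · rw [hf, Finset.sum_sub_distrib, ← Finset.mul_sum, ← Finset.mul_sum]
end

section
/- Uniqueness of the massive Green function (Lemma 3.2 of the paper): Let Ω ⊂ ℂ be a bounded, open, connected set, let u ∈ Ω, let m ≥ 0 and let k > 0. Suppose g, h : ℂ → ℝ are twice continuously differentiable on Ω \ {u} and both satisfy: (i) Δf(v) = m²·f(v) for all v ∈ Ω \ {u}, where Δf denotes the Laplacian of f (the sum of the two pure second partial derivatives, in the directions 1 and i); (ii) f vanishes at the boundary, i.e. for every ε > 0 there is η > 0 such that |f(v)| ≤ ε for all v ∈ Ω with dist(v, ∂Ω) < η; (iii) f(v) = k·log(1/|v − u|) + o(|log|v − u||) as v → u, i.e. (f(v) − k·log(1/|v − u|))/log(1/|v − u|) → 0 as v → u with v ∈ Ω \ {u}. Then g = h on Ω \ {u}. -/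
open Filter Metric Set

/-- Second directional derivative of `f : ℂ → ℝ` in the direction `d` at `v`. -/
noncomputable def secondDirDeriv (f : ℂ → ℝ) (d v : ℂ) : ℝ :=
  fderiv ℝ (fun w => fderiv ℝ f w d) v d

/-- The Laplacian of `f : ℂ → ℝ` at `v`: the sum of the two pure second partial
derivatives, in the directions `1` and `i`. -/
noncomputable def lap (f : ℂ → ℝ) (v : ℂ) : ℝ :=
  secondDirDeriv f 1 v + secondDirDeriv f Complex.I v

namespace MGF

variable {u d v : ℂ}

noncomputable def NL (u w : ℂ) : ℂ →L[ℝ] ℝ :=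
  (2 * (w - u).re) • Complex.reCLM + (2 * (w - u).im) • Complex.imCLM

lemma NL_apply (u w d : ℂ) :
    NL u w d = 2 * (w - u).re * d.re + 2 * (w - u).im * d.im := by
  simp [NL]

lemma hasFDerivAt_lin (u : ℂ) (a b : ℝ) (w : ℂ) :
    HasFDerivAt (fun z : ℂ => a * (z - u).re + b * (z - u).im)
      ((a • Complex.reCLM + b • Complex.imCLM : ℂ →L[ℝ] ℝ)) w := by
  have h : (fun z : ℂ => a * (z - u).re + b * (z - u).im)
      = fun z : ℂ => a * (Complex.reCLM z - u.re) + b * (Complex.imCLM z - u.im) := by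
    funext z; simp [Complex.sub_re, Complex.sub_im]
  rw [h]
  exact ((Complex.reCLM.hasFDerivAt.sub_const u.re).const_mul a).add
    ((Complex.imCLM.hasFDerivAt.sub_const u.im).const_mul b)

lemma hasFDerivAt_N (u w : ℂ) :
    HasFDerivAt (fun z => Complex.normSq (z - u)) (NL u w) w := by
  have hre : HasFDerivAt (fun z : ℂ => (z - u).re) (Complex.reCLM : ℂ →L[ℝ] ℝ) w := by
    have h : (fun z : ℂ => (z - u).re) = fun z : ℂ => Complex.reCLM z - u.re := by
      funext z; simp [Complex.sub_re]
    rw [h]; exact Complex.reCLM.hasFDerivAt.sub_const u.re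
  have him : HasFDerivAt (fun z : ℂ => (z - u).im) (Complex.imCLM : ℂ →L[ℝ] ℝ) w := by
    have h : (fun z : ℂ => (z - u).im) = fun z : ℂ => Complex.imCLM z - u.im := by
      funext z; simp [Complex.sub_im]
    rw [h]; exact Complex.imCLM.hasFDerivAt.sub_const u.im
  have h : (fun z => Complex.normSq (z - u))
      = fun z : ℂ => (z - u).re * (z - u).re + (z - u).im * (z - u).im := by
    funext z; simp [Complex.normSq_apply]
  rw [h]
  have := (hre.mul hre).add (him.mul him)
  refine this.congr_fderiv ?_
  ext e
  simp [NL]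
  ring

lemma fderiv_N_eq (u : ℂ) (d : ℂ) :
    (fun w => fderiv ℝ (fun z => Complex.normSq (z - u)) w d)
      = fun w => (2 * d.re) * (w - u).re + (2 * d.im) * (w - u).im := by
  funext w
  rw [(hasFDerivAt_N u w).fderiv, NL_apply]
  ring

lemma sdd_N (u : ℂ) (d v : ℂ) :
    secondDirDeriv (fun z => Complex.normSq (z - u)) d v
      = 2 * (d.re * d.re) + 2 * (d.im * d.im) := by
  unfold secondDirDeriv
  rw [fderiv_N_eq, (hasFDerivAt_lin u (2 * d.re) (2 * d.im) v).fderiv]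
  simp
  ring

lemma diff_fderiv_N (u : ℂ) (d v : ℂ) :
    DifferentiableAt ℝ (fun w => fderiv ℝ (fun z => Complex.normSq (z - u)) w d) v := by
  rw [fderiv_N_eq]
  exact (hasFDerivAt_lin u (2 * d.re) (2 * d.im) v).differentiableAt

lemma hasFDerivAt_LN (hw : v ≠ u) :
    HasFDerivAt (fun z => Real.log (Complex.normSq (z - u)))
      ((Complex.normSq (v - u))⁻¹ • NL u v) v :=
  (hasFDerivAt_N u v).log (ne_of_gt (Complex.normSq_pos.2 (sub_ne_zero.2 hw)))

lemma fderiv_LN_eventuallyEq (hv : v ≠ u) (d : ℂ) :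
    (fun w => fderiv ℝ (fun z => Real.log (Complex.normSq (z - u))) w d)
      =ᶠ[nhds v] fun w => (Complex.normSq (w - u))⁻¹
          * ((2 * d.re) * (w - u).re + (2 * d.im) * (w - u).im) := by
  filter_upwards [(isOpen_compl_singleton (x := u)).mem_nhds hv] with w hw
  rw [(hasFDerivAt_LN hw).fderiv, ContinuousLinearMap.smul_apply, NL_apply, smul_eq_mul]
  ring

lemma hasFDerivAt_LNfield (hv : v ≠ u) (d : ℂ) :
    HasFDerivAt (fun w => (Complex.normSq (w - u))⁻¹
          * ((2 * d.re) * (w - u).re + (2 * d.im) * (w - u).im))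
      ((Complex.normSq (v - u))⁻¹ • ((2 * d.re) • Complex.reCLM + (2 * d.im) • Complex.imCLM)
        + ((2 * d.re) * (v - u).re + (2 * d.im) * (v - u).im)
            • (-(Complex.normSq (v - u) ^ 2)⁻¹ • NL u v)) v := by
  have hN0 : Complex.normSq (v - u) ≠ 0 :=
    ne_of_gt (Complex.normSq_pos.2 (sub_ne_zero.2 hv))
  have hinv : HasFDerivAt (fun w => (Complex.normSq (w - u))⁻¹)
      (-(Complex.normSq (v - u) ^ 2)⁻¹ • NL u v) v :=
    (hasDerivAt_inv hN0).comp_hasFDerivAt v (hasFDerivAt_N u v)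
  exact hinv.mul (hasFDerivAt_lin u (2 * d.re) (2 * d.im) v)

lemma diff_fderiv_LN (hv : v ≠ u) (d : ℂ) :
    DifferentiableAt ℝ
      (fun w => fderiv ℝ (fun z => Real.log (Complex.normSq (z - u))) w d) v :=
  (Filter.EventuallyEq.differentiableAt_iff (fderiv_LN_eventuallyEq hv d)).2
    (hasFDerivAt_LNfield hv d).differentiableAt

lemma sdd_LN_val (hv : v ≠ u) (d : ℂ) :
    secondDirDeriv (fun z => Real.log (Complex.normSq (z - u))) d v
      = (Complex.normSq (v - u))⁻¹ * ((2 * d.re) * d.re + (2 * d.im) * d.im)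
        - (Complex.normSq (v - u) ^ 2)⁻¹
          * ((2 * d.re) * (v - u).re + (2 * d.im) * (v - u).im)
          * ((2 * d.re) * (v - u).re + (2 * d.im) * (v - u).im) := by
  unfold secondDirDeriv
  rw [(fderiv_LN_eventuallyEq hv d).fderiv_eq, (hasFDerivAt_LNfield hv d).fderiv]
  simp [NL_apply]
  ring

lemma sdd_LN_lap (hv : v ≠ u) :
    secondDirDeriv (fun z => Real.log (Complex.normSq (z - u))) 1 v
      + secondDirDeriv (fun z => Real.log (Complex.normSq (z - u))) Complex.I v = 0 := by
  have hN : Complex.normSq (v - u) = (v - u).re * (v - u).re + (v - u).im * (v - u).im :=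
    Complex.normSq_apply _
  have hN0 : Complex.normSq (v - u) ≠ 0 :=
    ne_of_gt (Complex.normSq_pos.2 (sub_ne_zero.2 hv))
  rw [hN] at hN0
  rw [sdd_LN_val hv 1, sdd_LN_val hv Complex.I, hN]
  simp only [Complex.one_re, Complex.one_im, Complex.I_re, Complex.I_im]
  generalize hx : (v - u).re = x at hN0 ⊢
  generalize hy : (v - u).im = y at hN0 ⊢
  field_simp
  ring


variable {f1 f2 f3 f4 : ℂ → ℝ} {c1 c2 c3 c4 C : ℝ} {d v : ℂ}

lemma fderiv_comb_eventuallyEq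
    (h1 : ∀ᶠ w in nhds v, DifferentiableAt ℝ f1 w)
    (h2 : ∀ᶠ w in nhds v, DifferentiableAt ℝ f2 w)
    (h3 : ∀ᶠ w in nhds v, DifferentiableAt ℝ f3 w)
    (h4 : ∀ᶠ w in nhds v, DifferentiableAt ℝ f4 w) :
    (fun w => fderiv ℝ (fun z => c1 * f1 z + c2 * f2 z + c3 * f3 z + c4 * f4 z + C) w d)
      =ᶠ[nhds v] fun w => c1 * fderiv ℝ f1 w d + c2 * fderiv ℝ f2 w d
          + c3 * fderiv ℝ f3 w d + c4 * fderiv ℝ f4 w d := by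
  filter_upwards [h1, h2, h3, h4] with w hw1 hw2 hw3 hw4
  have H : HasFDerivAt (fun z => c1 * f1 z + c2 * f2 z + c3 * f3 z + c4 * f4 z + C)
      ((((c1 • fderiv ℝ f1 w + c2 • fderiv ℝ f2 w) + c3 • fderiv ℝ f3 w)
          + c4 • fderiv ℝ f4 w)) w :=
    ((((hw1.hasFDerivAt.const_mul c1).add (hw2.hasFDerivAt.const_mul c2)).add
        (hw3.hasFDerivAt.const_mul c3)).add (hw4.hasFDerivAt.const_mul c4)).add_const C
  rw [H.fderiv]
  simp

lemma sdd_comb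
    (h1 : ∀ᶠ w in nhds v, DifferentiableAt ℝ f1 w)
    (h2 : ∀ᶠ w in nhds v, DifferentiableAt ℝ f2 w)
    (h3 : ∀ᶠ w in nhds v, DifferentiableAt ℝ f3 w)
    (h4 : ∀ᶠ w in nhds v, DifferentiableAt ℝ f4 w)
    (g1 : DifferentiableAt ℝ (fun w => fderiv ℝ f1 w d) v)
    (g2 : DifferentiableAt ℝ (fun w => fderiv ℝ f2 w d) v)
    (g3 : DifferentiableAt ℝ (fun w => fderiv ℝ f3 w d) v)
    (g4 : DifferentiableAt ℝ (fun w => fderiv ℝ f4 w d) v) :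
    secondDirDeriv (fun z => c1 * f1 z + c2 * f2 z + c3 * f3 z + c4 * f4 z + C) d v
      = c1 * secondDirDeriv f1 d v + c2 * secondDirDeriv f2 d v
        + c3 * secondDirDeriv f3 d v + c4 * secondDirDeriv f4 d v := by
  unfold secondDirDeriv
  rw [(fderiv_comb_eventuallyEq h1 h2 h3 h4).fderiv_eq]
  have H : HasFDerivAt (fun w => c1 * fderiv ℝ f1 w d + c2 * fderiv ℝ f2 w d
        + c3 * fderiv ℝ f3 w d + c4 * fderiv ℝ f4 w d)
      ((((c1 • fderiv ℝ (fun w => fderiv ℝ f1 w d) v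
        + c2 • fderiv ℝ (fun w => fderiv ℝ f2 w d) v)
        + c3 • fderiv ℝ (fun w => fderiv ℝ f3 w d) v)
        + c4 • fderiv ℝ (fun w => fderiv ℝ f4 w d) v)) v :=
    (((g1.hasFDerivAt.const_mul c1).add (g2.hasFDerivAt.const_mul c2)).add
        (g3.hasFDerivAt.const_mul c3)).add (g4.hasFDerivAt.const_mul c4)
  rw [H.fderiv]
  simp

lemma diff_fderiv_comb
    (h1 : ∀ᶠ w in nhds v, DifferentiableAt ℝ f1 w)
    (h2 : ∀ᶠ w in nhds v, DifferentiableAt ℝ f2 w)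
    (h3 : ∀ᶠ w in nhds v, DifferentiableAt ℝ f3 w)
    (h4 : ∀ᶠ w in nhds v, DifferentiableAt ℝ f4 w)
    (g1 : DifferentiableAt ℝ (fun w => fderiv ℝ f1 w d) v)
    (g2 : DifferentiableAt ℝ (fun w => fderiv ℝ f2 w d) v)
    (g3 : DifferentiableAt ℝ (fun w => fderiv ℝ f3 w d) v)
    (g4 : DifferentiableAt ℝ (fun w => fderiv ℝ f4 w d) v) :
    DifferentiableAt ℝ
      (fun w => fderiv ℝ (fun z => c1 * f1 z + c2 * f2 z + c3 * f3 z + c4 * f4 z + C) w d) v := by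
  rw [Filter.EventuallyEq.differentiableAt_iff (fderiv_comb_eventuallyEq h1 h2 h3 h4)]
  exact (((g1.const_mul c1).add (g2.const_mul c2)).add (g3.const_mul c3)).add (g4.const_mul c4)

lemma secondDirDeriv_nonpos_of_isLocalMax {W : ℂ → ℝ}
    (hdiff : ∀ᶠ w in nhds v, DifferentiableAt ℝ W w)
    (h2 : DifferentiableAt ℝ (fun w => fderiv ℝ W w d) v)
    (hmax : IsLocalMax W v) : secondDirDeriv W d v ≤ 0 := by
  by_contra hc
  push_neg at hc
  set c := secondDirDeriv W d v with hcdef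
  set l : ℝ → ℂ := fun t => v + t • d with hl
  have hline : ∀ t : ℝ, HasDerivAt l d t := by
    intro t
    simpa [hl] using ((hasDerivAt_id t).smul_const d).const_add v
  have hl0 : l 0 = v := by simp [hl]
  have htend : Tendsto l (nhds 0) (nhds v) := by
    have : ContinuousAt l 0 := (hline 0).continuousAt
    rwa [ContinuousAt, hl0] at this
  set ψ : ℝ → ℝ := fun t => fderiv ℝ W (l t) d with hψ
  have hψ0 : HasDerivAt ψ c 0 := by
    have h2' : HasFDerivAt (fun w => fderiv ℝ W w d)
        (fderiv ℝ (fun w => fderiv ℝ W w d) v) (l 0) := by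
      rw [hl0]; exact h2.hasFDerivAt
    simpa [hψ, hcdef, secondDirDeriv, Function.comp_def] using h2'.comp_hasDerivAt 0 (hline 0)
  have hψ0val : ψ 0 = 0 := by
    simp [hψ, hl0, hmax.fderiv_eq_zero]
  have hslope : Tendsto (fun t => ψ t / t) (nhdsWithin 0 {(0:ℝ)}ᶜ) (nhds c) := by
    have := hasDerivAt_iff_tendsto_slope.1 hψ0
    have heq : slope ψ 0 = fun t => ψ t / t := by
      funext t; rw [slope_def_field, hψ0val]; simp
    rwa [heq] at this
  have hpos : ∀ᶠ t in nhdsWithin 0 (Set.Ioi (0:ℝ)), c / 2 < ψ t / t := by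
    have h1 : ∀ᶠ t in nhdsWithin 0 {(0:ℝ)}ᶜ, c / 2 < ψ t / t :=
      hslope.eventually (eventually_gt_nhds (by linarith))
    exact h1.filter_mono (nhdsWithin_mono 0 (fun t ht => ne_of_gt ht))
  have hφd : ∀ᶠ t in nhds (0:ℝ), HasDerivAt (fun s => W (l s)) (ψ t) t := by
    filter_upwards [htend.eventually hdiff] with t ht
    exact ht.hasFDerivAt.comp_hasDerivAt t (hline t)
  have hφmax : ∀ᶠ t in nhds (0:ℝ), W (l t) ≤ W v := htend.eventually hmax
  rcases Metric.eventually_nhds_iff.1 (hφd.and hφmax) with ⟨δ1, hδ1, H1⟩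
  rcases Metric.eventually_nhds_iff.1 (eventually_nhdsWithin_iff.1 hpos) with ⟨δ2, hδ2, H2⟩
  set t1 := min δ1 δ2 / 2 with ht1
  have ht1pos : 0 < t1 := by positivity
  have ht1lt1 : t1 < δ1 := by
    have : min δ1 δ2 ≤ δ1 := min_le_left _ _
    simp only [ht1]; linarith
  have ht1lt2 : t1 < δ2 := by
    have : min δ1 δ2 ≤ δ2 := min_le_right _ _
    simp only [ht1]; linarith
  have hIcc : ∀ t ∈ Set.Icc (0:ℝ) t1, dist t 0 < δ1 := by
    intro t ht
    rw [Real.dist_eq, sub_zero, abs_of_nonneg ht.1]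
    linarith [ht.2]
  have hcont : ContinuousOn (fun s => W (l s)) (Set.Icc 0 t1) := by
    intro t ht
    exact ((H1 (hIcc t ht)).1.continuousAt).continuousWithinAt
  obtain ⟨ξ, hξ, hξeq⟩ := exists_hasDerivAt_eq_slope (fun s => W (l s)) ψ ht1pos hcont
    (fun x hx => (H1 (hIcc x ⟨le_of_lt hx.1, le_of_lt hx.2⟩)).1)
  have hWle : W (l t1) ≤ W v := (H1 (hIcc t1 ⟨le_of_lt ht1pos, le_refl _⟩)).2
  have hWl0 : W (l 0) = W v := by rw [hl0]
  have hψξ : ψ ξ ≤ 0 := by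
    rw [hξeq, hWl0]
    apply div_nonpos_of_nonpos_of_nonneg <;> linarith [hξ.1, hξ.2]
  have hξpos : (0:ℝ) < ξ := hξ.1
  have hξδ2 : dist ξ 0 < δ2 := by
    rw [Real.dist_eq, sub_zero, abs_of_pos hξpos]
    linarith [hξ.2]
  have := H2 hξδ2 hξpos
  have : (0:ℝ) < ψ ξ / ξ := lt_trans (by linarith) this
  have : (0:ℝ) < ψ ξ := by
    by_contra hle
    push_neg at hle
    have : ψ ξ / ξ ≤ 0 := div_nonpos_of_nonpos_of_nonneg hle (le_of_lt hξpos)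
    linarith
  linarith


theorem key
    (Ω : Set ℂ) (hΩo : IsOpen Ω) (hΩb : Bornology.IsBounded Ω)
    (u : ℂ) (m : ℝ) (k : ℝ)
    (g h : ℂ → ℝ)
    (hgC : ContDiffOn ℝ 2 g (Ω \ {u})) (hhC : ContDiffOn ℝ 2 h (Ω \ {u}))
    (hgLap : ∀ v ∈ Ω \ {u}, lap g v = m ^ 2 * g v)
    (hhLap : ∀ v ∈ Ω \ {u}, lap h v = m ^ 2 * h v)
    (hgBdry : ∀ ε > 0, ∃ η > 0, ∀ v ∈ Ω, Metric.infDist v (frontier Ω) < η → |g v| ≤ ε)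
    (hhBdry : ∀ ε > 0, ∃ η > 0, ∀ v ∈ Ω, Metric.infDist v (frontier Ω) < η → |h v| ≤ ε)
    (hgSing : Tendsto
      (fun v => (g v - k * Real.log (1 / ‖v - u‖))
                  / Real.log (1 / ‖v - u‖))
      (nhdsWithin u (Ω \ {u})) (nhds 0))
    (hhSing : Tendsto
      (fun v => (h v - k * Real.log (1 / ‖v - u‖))
                  / Real.log (1 / ‖v - u‖))
      (nhdsWithin u (Ω \ {u})) (nhds 0)) :
    ∀ v ∈ Ω \ {u}, g v ≤ h v := by
  set O := Ω \ {u} with hOdef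
  have hO : IsOpen O := hΩo.sdiff isClosed_singleton
  obtain ⟨R, hRsub⟩ := hΩb.subset_closedBall u
  set R' : ℝ := max R 1 with hR'def
  have hR'1 : (1:ℝ) ≤ R' := le_max_right _ _
  have hR'pos : (0:ℝ) < R' := lt_of_lt_of_le one_pos hR'1
  have hR' : Ω ⊆ closedBall u R' := fun z hz =>
    closedBall_subset_closedBall (le_max_left _ _) (hRsub hz)
  have habs_le : ∀ z ∈ Ω, ‖z - u‖ ≤ R' := by
    intro z hz
    have := hR' hz
    rwa [mem_closedBall, Complex.dist_eq] at this
  have hΩne : Ω ≠ univ := by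
    intro hEq
    have hmem : u + ((R' + 1 : ℝ) : ℂ) ∈ Ω := by rw [hEq]; trivial
    have := habs_le _ hmem
    simp only [add_sub_cancel_left] at this
    rw [Complex.norm_real, Real.norm_eq_abs] at this
    rw [abs_of_pos (by linarith)] at this
    linarith
  -- the singularity bound for the difference
  have hsing : Tendsto (fun z => (g z - h z) / Real.log (1 / ‖z - u‖))
      (nhdsWithin u O) (nhds 0) := by
    have heq : (fun z => (g z - h z) / Real.log (1 / ‖z - u‖))
        = fun z => (g z - k * Real.log (1 / ‖z - u‖))
              / Real.log (1 / ‖z - u‖)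
            - (h z - k * Real.log (1 / ‖z - u‖))
              / Real.log (1 / ‖z - u‖) := by
      funext z
      rw [div_sub_div_same]
      congr 1
      ring
    rw [heq]
    simpa using hgSing.sub hhSing
  intro v hv
  set Cv : ℝ := 1 + Real.log R' + R' ^ 2 + |Real.log (1 / ‖v - u‖)| with hCvdef
  have hCvpos : 0 < Cv := by
    have := Real.log_nonneg hR'1
    have := sq_nonneg R'
    have := abs_nonneg (Real.log (1 / ‖v - u‖))
    simp only [hCvdef]
    linarith
  suffices hsuf : ∀ ε > 0, g v - h v ≤ ε * Cv by
    by_contra hgt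
    push_neg at hgt
    have hpos : 0 < g v - h v := by linarith
    have hcal := hsuf ((g v - h v) / (2 * Cv)) (by positivity)
    have heq : (g v - h v) / (2 * Cv) * Cv = (g v - h v) / 2 := by
      field_simp
    rw [heq] at hcal
    linarith
  intro ε hε
  -- boundary control
  obtain ⟨η1, hη1, Hgb⟩ := hgBdry (ε / 2) (by linarith)
  obtain ⟨η2, hη2, Hhb⟩ := hhBdry (ε / 2) (by linarith)
  set η := min η1 η2 with hηdef
  have hη : 0 < η := lt_min hη1 hη2
  have Hbd : ∀ z ∈ Ω, infDist z (frontier Ω) < η → g z - h z ≤ ε := by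
    intro z hz hdz
    have h1 := abs_le.1 (Hgb z hz (lt_of_lt_of_le hdz (min_le_left _ _)))
    have h2 := abs_le.1 (Hhb z hz (lt_of_lt_of_le hdz (min_le_right _ _)))
    linarith [h1.2, h2.1]
  -- singularity control
  have hev : ∀ᶠ z in nhdsWithin u O,
      |(g z - h z) / Real.log (1 / ‖z - u‖)| < ε := by
    have H := Metric.tendsto_nhds.1 hsing ε hε
    filter_upwards [H] with z hz
    rwa [Real.dist_eq, sub_zero] at hz
  obtain ⟨r1, hr1, Hr1⟩ := Metric.mem_nhdsWithin_iff.1 hev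
  set r0 := min r1 1 with hr0def
  have hr0 : 0 < r0 := lt_min hr1 one_pos
  have hr0le1 : r0 ≤ 1 := min_le_right _ _
  have Hsing : ∀ z ∈ O, ‖z - u‖ < r0 →
      g z - h z ≤ ε * Real.log (1 / ‖z - u‖) := by
    intro z hz hzr
    have hzne : z ≠ u := by
      have := hz.2; simpa using this
    have habs : 0 < ‖z - u‖ := by
      simpa using sub_ne_zero.2 hzne
    have hlt1 : ‖z - u‖ < 1 := lt_of_lt_of_le hzr hr0le1
    have hLpos : 0 < Real.log (1 / ‖z - u‖) := by
      rw [one_div]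
      exact Real.log_pos ((one_lt_inv₀ habs).2 hlt1)
    have hmem : z ∈ ball u r1 ∩ O := by
      refine ⟨?_, hz⟩
      rw [mem_ball, Complex.dist_eq]
      exact lt_of_lt_of_le hzr (min_le_left _ _)
    have hb := Hr1 hmem
    rw [Set.mem_setOf_eq, abs_div, abs_of_pos hLpos, div_lt_iff₀ hLpos] at hb
    calc g z - h z ≤ |g z - h z| := le_abs_self _
      _ ≤ ε * Real.log (1 / ‖z - u‖) := le_of_lt hb
  -- the comparison function
  set LN : ℂ → ℝ := fun z => Real.log (Complex.normSq (z - u)) with hLNdef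
  set NN : ℂ → ℝ := fun z => Complex.normSq (z - u) with hNNdef
  set C0 : ℝ := ε * (1 + Real.log R' + R' ^ 2) with hC0def
  set W : ℂ → ℝ := fun z => 1 * g z + (-1) * h z + (ε / 2) * LN z + ε * NN z + (-C0)
    with hWdef
  have hLNL : ∀ z : ℂ, LN z = -2 * Real.log (1 / ‖z - u‖) := by
    intro z
    simp only [hLNdef]
    rw [← Complex.sq_norm, Real.log_pow, one_div, Real.log_inv]
    push_cast
    ring
  have hNN_le : ∀ z ∈ Ω, NN z ≤ R' ^ 2 := by
    intro z hz
    simp only [hNNdef]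
    rw [← Complex.sq_norm]
    exact pow_le_pow_left₀ (norm_nonneg _) (habs_le z hz) 2
  have hlog_le : ∀ z : ℂ, z ≠ u → z ∈ Ω →
      Real.log (‖z - u‖) ≤ Real.log R' := by
    intro z hzne hz
    have habs : 0 < ‖z - u‖ := by simpa using sub_ne_zero.2 hzne
    exact (Real.log_le_log_iff habs hR'pos).2 (habs_le z hz)
  -- cases (a) and (b): W ≤ 0 near the boundary and near the singularity
  have hW0 : ∀ z ∈ O, (infDist z (frontier Ω) < η ∨ ‖z - u‖ < r0) →
      W z ≤ 0 := by
    intro z hz hcase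
    have hzne : z ≠ u := by have := hz.2; simpa using this
    have hNle := hNN_le z hz.1
    have hlog := hlog_le z hzne hz.1
    have hLN2 : (ε / 2) * LN z = ε * Real.log (‖z - u‖) := by
      rw [hLNL z, one_div, Real.log_inv]
      ring
    have hlogR0 : 0 ≤ Real.log R' := Real.log_nonneg hR'1
    simp only [hWdef, hC0def]
    rcases hcase with hcb | hcs
    · have hfz := Hbd z hz.1 hcb
      have e1 : (ε / 2) * LN z ≤ ε * Real.log R' := by
        rw [hLN2]
        exact mul_le_mul_of_nonneg_left hlog (le_of_lt hε)
      have e2 : ε * NN z ≤ ε * R' ^ 2 := mul_le_mul_of_nonneg_left hNle (le_of_lt hε)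
      have e5 : ε * (1 + Real.log R' + R' ^ 2)
          = ε + ε * Real.log R' + ε * R' ^ 2 := by ring
      linarith
    · have hfz := Hsing z hz hcs
      have e0 : (ε / 2) * LN z = -(ε * Real.log (1 / ‖z - u‖)) := by
        rw [hLNL z]; ring
      have e2 : ε * NN z ≤ ε * R' ^ 2 := mul_le_mul_of_nonneg_left hNle (le_of_lt hε)
      have e5 : ε * (1 + Real.log R' + R' ^ 2)
          = ε + ε * Real.log R' + ε * R' ^ 2 := by ring
      have e9 : 0 ≤ ε * Real.log R' := mul_nonneg (le_of_lt hε) hlogR0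
      linarith
  -- main claim : W ≤ 0 on O
  have hWall : ∀ z ∈ O, W z ≤ 0 := by
    intro z hz
    by_cases hc1 : infDist z (frontier Ω) < η ∨ ‖z - u‖ < r0
    · exact hW0 z hz hc1
    · push_neg at hc1
      obtain ⟨hc1a, hc1b⟩ := hc1
      -- the compact set K
      set K : Set ℂ := closure Ω ∩ {w | r0 / 2 ≤ ‖w - u‖}
          ∩ {w | η / 2 ≤ infDist w (frontier Ω)} with hKdef
      have hKclosed : IsClosed K := by
        refine ((isClosed_closure.inter ?_).inter ?_)
        · exact isClosed_le continuous_const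
            (continuous_norm.comp (continuous_id.sub continuous_const))
        · exact isClosed_le continuous_const (continuous_infDist_pt _)
      have hKbdd : Bornology.IsBounded K :=
        hΩb.closure.subset (fun w hw => hw.1.1)
      have hKcpt : IsCompact K := Metric.isCompact_of_isClosed_isBounded hKclosed hKbdd
      have hKO : K ⊆ O := by
        intro w hw
        have hwne : ‖w - u‖ ≠ 0 := by
          have h' := hw.1.2
          simp only [Set.mem_setOf_eq] at h'
          intro h0
          rw [h0] at h'
          linarith
        constructor
        · by_contra hwΩ
          have hwf : w ∈ frontier Ω := by
            rw [frontier, hΩo.interior_eq]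
            exact ⟨hw.1.1, hwΩ⟩
          have h0 : infDist w (frontier Ω) = 0 := Metric.infDist_zero_of_mem hwf
          have := hw.2
          simp only [Set.mem_setOf_eq, h0] at this
          linarith
        · intro hwu
          apply hwne
          simp only [Set.mem_singleton_iff] at hwu
          simp [hwu]
      have hzK : z ∈ K := by
        refine ⟨⟨subset_closure hz.1, ?_⟩, ?_⟩ <;> simp only [Set.mem_setOf_eq] <;> linarith
      -- continuity of W on K
      have hWcont : ContinuousOn W K := by
        have hgc : ContinuousOn g K := hgC.continuousOn.mono hKO
        have hhc : ContinuousOn h K := hhC.continuousOn.mono hKO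
        have hLNc : ContinuousOn LN K := by
          intro w hw
          have hwne : w ≠ u := by
            have := (hKO hw).2; simpa using this
          exact ((hasFDerivAt_LN hwne).differentiableAt.continuousAt).continuousWithinAt
        have hNc : ContinuousOn NN K := by
          intro w hw
          exact ((hasFDerivAt_N u w).differentiableAt.continuousAt).continuousWithinAt
        simp only [hWdef]
        exact (((((continuousOn_const.mul hgc).add (continuousOn_const.mul hhc)).add
          (continuousOn_const.mul hLNc)).add (continuousOn_const.mul hNc)).add
          continuousOn_const)
      obtain ⟨v₀, hv₀K, hv₀max⟩ := hKcpt.exists_isMaxOn ⟨z, hzK⟩ hWcont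
      suffices hWv₀ : W v₀ ≤ 0 from le_trans (hv₀max hzK) hWv₀
      by_cases hc2 : infDist v₀ (frontier Ω) < η ∨ ‖v₀ - u‖ < r0
      · exact hW0 v₀ (hKO hv₀K) hc2
      push_neg at hc2
      obtain ⟨hc2a, hc2b⟩ := hc2
      by_contra hWpos
      push_neg at hWpos
      have hv₀O : v₀ ∈ O := hKO hv₀K
      have hv₀ne : v₀ ≠ u := by have := hv₀O.2; simpa using this
      have hv₀Ω : v₀ ∈ Ω := hv₀O.1
      -- small ball around v₀ inside K
      set ρ := min (η / 2) (r0 / 2) with hρdef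
      have hρpos : 0 < ρ := lt_min (by linarith) (by linarith)
      have hρη : ρ ≤ η / 2 := min_le_left _ _
      have hρr : ρ ≤ r0 / 2 := min_le_right _ _
      have hballK : ball v₀ ρ ⊆ K := by
        intro w hw
        rw [mem_ball] at hw
        -- w ∈ Ω
        obtain ⟨y, hy, hyd⟩ := exists_mem_frontier_infDist_compl_eq_dist hv₀Ω hΩne
        have h5 : η ≤ infDist v₀ Ωᶜ := by
          rw [hyd]
          exact le_trans hc2a (Metric.infDist_le_dist_of_mem hy)
        have hwΩ : w ∈ Ω := by
          apply Metric.ball_infDist_compl_subset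
          rw [mem_ball]
          have : dist w v₀ < η := lt_of_lt_of_le hw (by linarith)
          linarith
        refine ⟨⟨subset_closure hwΩ, ?_⟩, ?_⟩
        · simp only [Set.mem_setOf_eq]
          have htri : ‖v₀ - u‖ ≤ dist v₀ w + ‖w - u‖ := by
            rw [← Complex.dist_eq, ← Complex.dist_eq]
            exact dist_triangle v₀ w u
          have hdc : dist v₀ w = dist w v₀ := dist_comm _ _
          linarith
        · simp only [Set.mem_setOf_eq]
          have htri : infDist v₀ (frontier Ω) ≤ infDist w (frontier Ω) + dist v₀ w := 
            Metric.infDist_le_infDist_add_dist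
          rw [dist_comm v₀ w] at htri
          linarith
      have hmaxloc : IsLocalMax W v₀ :=
        Filter.eventually_of_mem (ball_mem_nhds _ hρpos) (fun w hw => hv₀max (hballK hw))
      -- differentiability data at v₀
      have hOnhds : O ∈ nhds v₀ := hO.mem_nhds hv₀O
      have hgC2 : ContDiffOn ℝ ((1:WithTop ℕ∞) + 1) g O := by
        convert hgC using 2
        exact one_add_one_eq_two
      have hhC2 : ContDiffOn ℝ ((1:WithTop ℕ∞) + 1) h O := by
        convert hhC using 2
        exact one_add_one_eq_two
      have hgdiff_ev : ∀ᶠ w in nhds v₀, DifferentiableAt ℝ g w := by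
        filter_upwards [hOnhds] with w hw
        exact (hgC.differentiableOn (by norm_num)).differentiableAt (hO.mem_nhds hw)
      have hhdiff_ev : ∀ᶠ w in nhds v₀, DifferentiableAt ℝ h w := by
        filter_upwards [hOnhds] with w hw
        exact (hhC.differentiableOn (by norm_num)).differentiableAt (hO.mem_nhds hw)
      have hLN_ev : ∀ᶠ w in nhds v₀, DifferentiableAt ℝ LN w := by
        filter_upwards [(isOpen_compl_singleton (x := u)).mem_nhds hv₀ne] with w hw
        exact (hasFDerivAt_LN hw).differentiableAt
      have hNN_ev : ∀ᶠ w in nhds v₀, DifferentiableAt ℝ NN w :=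
        Filter.Eventually.of_forall fun w => (hasFDerivAt_N u w).differentiableAt
      have hgfd : ∀ d : ℂ, DifferentiableAt ℝ (fun w => fderiv ℝ g w d) v₀ := by
        intro d
        have h2' : ContDiffOn ℝ 1 (fderiv ℝ g) O :=
          ((contDiffOn_succ_iff_fderiv_of_isOpen hO).1 hgC2).2.2
        have hdiff : DifferentiableAt ℝ (fderiv ℝ g) v₀ :=
          (h2'.differentiableOn one_ne_zero).differentiableAt hOnhds
        exact hdiff.clm_apply (differentiableAt_const d)
      have hhfd : ∀ d : ℂ, DifferentiableAt ℝ (fun w => fderiv ℝ h w d) v₀ := by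
        intro d
        have h2' : ContDiffOn ℝ 1 (fderiv ℝ h) O :=
          ((contDiffOn_succ_iff_fderiv_of_isOpen hO).1 hhC2).2.2
        have hdiff : DifferentiableAt ℝ (fderiv ℝ h) v₀ :=
          (h2'.differentiableOn one_ne_zero).differentiableAt hOnhds
        exact hdiff.clm_apply (differentiableAt_const d)
      -- Laplacian of W at v₀
      have hsdd : ∀ d : ℂ, secondDirDeriv W d v₀
          = 1 * secondDirDeriv g d v₀ + (-1) * secondDirDeriv h d v₀
            + (ε / 2) * secondDirDeriv LN d v₀ + ε * secondDirDeriv NN d v₀ := by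
        intro d
        simp only [hWdef]
        exact sdd_comb hgdiff_ev hhdiff_ev hLN_ev hNN_ev
          (hgfd d) (hhfd d) (diff_fderiv_LN hv₀ne d) (diff_fderiv_N u d v₀)
      have hlapsum : secondDirDeriv W 1 v₀ + secondDirDeriv W Complex.I v₀
          = m ^ 2 * g v₀ - m ^ 2 * h v₀ + 4 * ε := by
        have hg' := hgLap v₀ hv₀O
        have hh' := hhLap v₀ hv₀O
        simp only [lap] at hg' hh'
        have hLN' := sdd_LN_lap (u := u) hv₀ne
        have e3 : (ε / 2) * secondDirDeriv (fun z => Real.log (Complex.normSq (z - u))) 1 v₀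
            + (ε / 2) * secondDirDeriv (fun z => Real.log (Complex.normSq (z - u)))
                Complex.I v₀ = 0 := by
          rw [← mul_add, hLN', mul_zero]
        have hN1 := sdd_N u 1 v₀
        have hNI := sdd_N u Complex.I v₀
        simp only [Complex.one_re, Complex.one_im, Complex.I_re, Complex.I_im] at hN1 hNI
        rw [hsdd 1, hsdd Complex.I]
        simp only [hLNdef, hNNdef]
        rw [hN1, hNI]
        linarith [hg', hh', e3]
      -- second derivative test
      have hWdiff_ev : ∀ᶠ w in nhds v₀, DifferentiableAt ℝ W w := by
        filter_upwards [hgdiff_ev, hhdiff_ev, hLN_ev, hNN_ev] with w h1 h2 h3 h4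
        simp only [hWdef]
        exact ((((h1.const_mul 1).add (h2.const_mul (-1))).add
          (h3.const_mul (ε / 2))).add (h4.const_mul ε)).add_const _
      have hWfd : ∀ d : ℂ, DifferentiableAt ℝ (fun w => fderiv ℝ W w d) v₀ := by
        intro d
        simp only [hWdef]
        exact diff_fderiv_comb hgdiff_ev hhdiff_ev hLN_ev hNN_ev
          (hgfd d) (hhfd d) (diff_fderiv_LN hv₀ne d) (diff_fderiv_N u d v₀)
      have ht1 := secondDirDeriv_nonpos_of_isLocalMax hWdiff_ev (hWfd 1) hmaxloc
      have htI := secondDirDeriv_nonpos_of_isLocalMax hWdiff_ev (hWfd Complex.I) hmaxloc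
      -- positivity of g - h at v₀
      have hfW : W v₀ ≤ g v₀ - h v₀ := by
        have hNle := hNN_le v₀ hv₀Ω
        have hlog := hlog_le v₀ hv₀ne hv₀Ω
        have hLN2 : (ε / 2) * LN v₀ = ε * Real.log (‖v₀ - u‖) := by
          rw [hLNL v₀, one_div, Real.log_inv]; ring
        have e1 : (ε / 2) * LN v₀ ≤ ε * Real.log R' := by
          rw [hLN2]; exact mul_le_mul_of_nonneg_left hlog (le_of_lt hε)
        have e2 : ε * NN v₀ ≤ ε * R' ^ 2 := mul_le_mul_of_nonneg_left hNle (le_of_lt hε)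
        have e5 : ε * (1 + Real.log R' + R' ^ 2)
            = ε + ε * Real.log R' + ε * R' ^ 2 := by ring
        simp only [hWdef, hC0def]
        linarith
      have h0 : 0 ≤ m ^ 2 * g v₀ - m ^ 2 * h v₀ := by
        have h0' : 0 ≤ m ^ 2 * (g v₀ - h v₀) :=
          mul_nonneg (sq_nonneg m) (by linarith)
        rw [mul_sub] at h0'
        linarith
      linarith [hlapsum, ht1, htI]
  -- conclusion
  have hWv := hWall v hv
  simp only [hWdef, hC0def] at hWv
  have hLN3 : -((ε / 2) * LN v) = ε * Real.log (1 / ‖v - u‖) := by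
    rw [hLNL v]; ring
  have hNN0 : 0 ≤ NN v := by simp only [hNNdef]; exact Complex.normSq_nonneg _
  have habsL : Real.log (1 / ‖v - u‖)
      ≤ |Real.log (1 / ‖v - u‖)| := le_abs_self _
  have e6 : 0 ≤ ε * NN v := mul_nonneg (le_of_lt hε) hNN0
  have e7 : ε * Real.log (1 / ‖v - u‖)
      ≤ ε * |Real.log (1 / ‖v - u‖)| :=
    mul_le_mul_of_nonneg_left habsL (le_of_lt hε)
  rw [hCvdef]
  have e8 : ε * (1 + Real.log R' + R' ^ 2 + |Real.log (1 / ‖v - u‖)|)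
      = ε + ε * Real.log R' + ε * R' ^ 2
        + ε * |Real.log (1 / ‖v - u‖)| := by
    ring
  have e5 : ε * (1 + Real.log R' + R' ^ 2)
      = ε + ε * Real.log R' + ε * R' ^ 2 := by ring
  linarith [hWv, hLN3, e6, e7, e8, e5]

end MGF

/-- **Uniqueness of the massive Green function** (Lemma 3.2). If `g` and `h` are both
massive harmonic with mass `m` on `Ω \ {u}`, vanish at the boundary of the bounded
domain `Ω`, and have a logarithmic singularity `k·log(1/|v-u|) + o(|log|v-u||)` at `u`,
then `g = h` on `Ω \ {u}`. -/
theorem massive_green_function_unique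
    (Ω : Set ℂ) (hΩo : IsOpen Ω) (hΩb : Bornology.IsBounded Ω) (hΩc : IsConnected Ω)
    (u : ℂ) (hu : u ∈ Ω) (m : ℝ) (hm : 0 ≤ m) (k : ℝ) (hk : 0 < k)
    (g h : ℂ → ℝ)
    (hgC : ContDiffOn ℝ 2 g (Ω \ {u})) (hhC : ContDiffOn ℝ 2 h (Ω \ {u}))
    (hgLap : ∀ v ∈ Ω \ {u}, lap g v = m ^ 2 * g v)
    (hhLap : ∀ v ∈ Ω \ {u}, lap h v = m ^ 2 * h v)
    (hgBdry : ∀ ε > 0, ∃ η > 0, ∀ v ∈ Ω, Metric.infDist v (frontier Ω) < η → |g v| ≤ ε)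
    (hhBdry : ∀ ε > 0, ∃ η > 0, ∀ v ∈ Ω, Metric.infDist v (frontier Ω) < η → |h v| ≤ ε)
    (hgSing : Tendsto
      (fun v => (g v - k * Real.log (1 / ‖v - u‖))
                  / Real.log (1 / ‖v - u‖))
      (nhdsWithin u (Ω \ {u})) (nhds 0))
    (hhSing : Tendsto
      (fun v => (h v - k * Real.log (1 / ‖v - u‖))
                  / Real.log (1 / ‖v - u‖))
      (nhdsWithin u (Ω \ {u})) (nhds 0)) :
    Set.EqOn g h (Ω \ {u}) := by
  intro v hv
  have h1 := MGF.key Ω hΩo hΩb u m k g h hgC hhC hgLap hhLap hgBdry hhBdry hgSing hhSing v hv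
  have h2 := MGF.key Ω hΩo hΩb u m k h g hhC hgC hhLap hgLap hhBdry hgBdry hhSing hgSing v hv
  exact le_antisymm h1 h2
end

section
/- Monotonicity of trinomial point probabilities in the displacement (Lemma 3.9 of the paper): Let n ≥ 1 be an integer and let (a₁, a₂, a₃) and (b₁, b₂, b₃) be triples of nonnegative integers with a₁ + a₂ + a₃ = b₁ + b₂ + b₃ = n. If |b₁ + b₂·τ + b₃·τ²| < (1/2)·|a₁ + a₂·τ + a₃·τ²|, then n!/(b₁!·b₂!·b₃!) ≥ n!/(a₁!·a₂!·a₃!). Equivalently: for the simple random walk on the directed triangular lattice started at a point x, if z is any point reachable in exactly n steps with |z − x| < (1/2)·|y − x|, then the probability of being at z after n steps is at least the probability of being at y after n steps. -/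
lemma triTau_cube : triTau ^ 3 = 1 := by
  rw [triTau, ← Complex.exp_nat_mul]
  rw [show ((3:ℕ):ℂ) * (2 * Real.pi * Complex.I / 3) = 2 * Real.pi * Complex.I by push_cast; ring]
  exact Complex.exp_two_pi_mul_I

lemma triTau_ne_one : triTau ≠ 1 := by
  intro hone
  rw [triTau, Complex.exp_eq_one_iff] at hone
  obtain ⟨k, hk⟩ := hone
  have hπ : (Real.pi : ℂ) ≠ 0 := by exact_mod_cast Real.pi_ne_zero
  have hI : Complex.I ≠ 0 := Complex.I_ne_zero
  have h3 : (1 : ℂ) = 3 * k := by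
    have h2 : (2:ℂ) * Real.pi * Complex.I * 1 = 2 * Real.pi * Complex.I * (3 * k) := by
      linear_combination 3 * hk
    exact mul_left_cancel₀ (by simp [hπ, hI] : (2:ℂ) * Real.pi * Complex.I ≠ 0) h2
  have h4 : (1 : ℤ) = 3 * k := by exact_mod_cast h3
  omega

lemma triTau_sum : 1 + triTau + triTau ^ 2 = 0 := by
  have h := triTau_cube
  have h1 : (triTau - 1) * (1 + triTau + triTau ^ 2) = 0 := by linear_combination h
  rcases mul_eq_zero.mp h1 with h2 | h2
  · exact absurd (by linear_combination h2) triTau_ne_one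
  · exact h2

lemma triTau_conj : (starRingEnd ℂ) triTau = triTau ^ 2 := by
  have h : (starRingEnd ℂ) triTau = Complex.exp (-(2 * Real.pi * Complex.I / 3)) := by
    rw [triTau, ← Complex.exp_conj]
    congr 1
    simp [map_div₀, map_ofNat, Complex.conj_I, Complex.conj_ofReal]
    ring
  rw [h, Complex.exp_neg, ← triTau]
  exact inv_eq_of_mul_eq_one_right (by linear_combination triTau_cube)

lemma absq (c₁ c₂ c₃ : ℕ) :
    (‖(c₁:ℂ) + (c₂:ℂ) * triTau + (c₃:ℂ) * triTau ^ 2‖) ^ 2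
      = (c₁:ℝ)^2 + (c₂:ℝ)^2 + (c₃:ℝ)^2 - c₁*c₂ - c₂*c₃ - c₃*c₁ := by
  have hz : ((c₁:ℂ) + (c₂:ℂ) * triTau + (c₃:ℂ) * triTau ^ 2) * (starRingEnd ℂ) ((c₁:ℂ) + (c₂:ℂ) * triTau + (c₃:ℂ) * triTau ^ 2)
      = ((c₁:ℝ)^2 + (c₂:ℝ)^2 + (c₃:ℝ)^2 - c₁*c₂ - c₂*c₃ - c₃*c₁ : ℝ) := by
    have hc : (starRingEnd ℂ) ((c₁:ℂ) + (c₂:ℂ) * triTau + (c₃:ℂ) * triTau ^ 2)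
        = (c₁:ℂ) + (c₂:ℂ) * triTau^2 + (c₃:ℂ) * (triTau^2)^2 := by
      simp [map_add, map_mul, map_pow, triTau_conj]
    rw [hc]
    push_cast
    linear_combination ((c₂:ℂ)^2*(triTau-1) + (c₃:ℂ)^2*(triTau^3+1)*(triTau-1) + (c₁:ℂ)*(c₂:ℂ)
      + (c₁:ℂ)*(c₃:ℂ)*(triTau^2-triTau+1) + (c₂:ℂ)*(c₃:ℂ)*(triTau^3-triTau+1)) * triTau_sum
  rw [Complex.sq_norm]
  have := Complex.mul_conj ((c₁:ℂ) + (c₂:ℂ) * triTau + (c₃:ℂ) * triTau ^ 2)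
  rw [this] at hz
  exact_mod_cast hz

lemma fact_pair' : ∀ (k x y u v : ℕ), x - u ≤ k → x + y = u + v → v ≤ u → u ≤ x →
    u.factorial * v.factorial ≤ x.factorial * y.factorial := by
  intro k
  induction k with
  | zero =>
    intro x y u v hk hs hvu hux
    have hxu : x = u := by omega
    have hyv : y = v := by omega
    subst hxu; subst hyv; exact le_refl _
  | succ k ih =>
    intro x y u v hk hs hvu hux
    by_cases hx : u = x
    · have hyv : y = v := by omega
      subst hx; subst hyv; exact le_refl _
    · have hlt : u < x := lt_of_le_of_ne hux hx
      have hv1 : 1 ≤ v := by omega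
      obtain ⟨w, rfl⟩ : ∃ w, v = w + 1 := ⟨v - 1, by omega⟩
      have step : u.factorial * (w+1).factorial ≤ (u+1).factorial * w.factorial := by
        calc u.factorial * (w+1).factorial
            = (u.factorial * w.factorial) * (w+1) := by
              rw [Nat.factorial_succ]; ring
          _ ≤ (u.factorial * w.factorial) * (u+1) :=
              Nat.mul_le_mul_left _ (by omega)
          _ = (u+1).factorial * w.factorial := by
              rw [Nat.factorial_succ]; ring
      refine step.trans (ih x y (u+1) w (by omega) (by omega) (by omega) (by omega))

lemma fact_pair (x y u v : ℕ) (hs : x + y = u + v) (hu : u ≤ x) (hv : v ≤ x) :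
    u.factorial * v.factorial ≤ x.factorial * y.factorial := by
  rcases le_total v u with h | h
  · exact fact_pair' (x - u) x y u v le_rfl hs h hu
  · calc u.factorial * v.factorial = v.factorial * u.factorial := by ring
      _ ≤ x.factorial * y.factorial := fact_pair' (x - v) x y v u le_rfl (by omega) h hv

lemma key : ∀ (k x y z p q r : ℕ), x - p ≤ k → x + y + z = p + q + r →
    q ≤ p → r ≤ q → p ≤ x → z ≤ r →
    p.factorial * q.factorial * r.factorial ≤ x.factorial * y.factorial * z.factorial := by
  intro k
  induction k with
  | zero =>
    intro x y z p q r hk hs hqp hrq hpx hzr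
    have hxp : p = x := by omega
    subst hxp
    have h2 : q.factorial * r.factorial ≤ y.factorial * z.factorial :=
      fact_pair y z q r (by omega) (by omega) (by omega)
    calc p.factorial * q.factorial * r.factorial
        = p.factorial * (q.factorial * r.factorial) := by ring
      _ ≤ p.factorial * (y.factorial * z.factorial) := Nat.mul_le_mul_left _ h2
      _ = p.factorial * y.factorial * z.factorial := by ring
  | succ k ih =>
    intro x y z p q r hk hs hqp hrq hpx hzr
    by_cases hpx' : p = x
    · subst hpx'
      have h2 : q.factorial * r.factorial ≤ y.factorial * z.factorial :=
        fact_pair y z q r (by omega) (by omega) (by omega)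
      calc p.factorial * q.factorial * r.factorial
          = p.factorial * (q.factorial * r.factorial) := by ring
        _ ≤ p.factorial * (y.factorial * z.factorial) := Nat.mul_le_mul_left _ h2
        _ = p.factorial * y.factorial * z.factorial := by ring
    · by_cases hzr' : z = r
      · subst hzr'
        have h2 : p.factorial * q.factorial ≤ x.factorial * y.factorial :=
          fact_pair x y p q (by omega) hpx (by omega)
        exact Nat.mul_le_mul_right _ h2
      · have hlt : p < x := lt_of_le_of_ne hpx hpx'
        have hr1 : z < r := lt_of_le_of_ne hzr hzr'
        obtain ⟨w, rfl⟩ : ∃ w, r = w + 1 := ⟨r - 1, by omega⟩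
        have step : p.factorial * q.factorial * (w+1).factorial
            ≤ (p+1).factorial * q.factorial * w.factorial := by
          calc p.factorial * q.factorial * (w+1).factorial
              = (p.factorial * q.factorial * w.factorial) * (w+1) := by
                rw [Nat.factorial_succ]; ring
            _ ≤ (p.factorial * q.factorial * w.factorial) * (p+1) :=
                Nat.mul_le_mul_left _ (by omega)
            _ = (p+1).factorial * q.factorial * w.factorial := by
                rw [Nat.factorial_succ]; ring
        exact step.trans (ih x y z (p+1) q w (by omega) (by omega) (by omega)
          (by omega) (by omega) (by omega))

lemma key2 (x y z p q r : ℕ) (hs : x + y + z = p + q + r)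
    (hp : p ≤ x) (hq : q ≤ x) (hr : r ≤ x)
    (hzp : z ≤ p) (hzq : z ≤ q) (hzr : z ≤ r) :
    p.factorial * q.factorial * r.factorial ≤ x.factorial * y.factorial * z.factorial := by
  rcases le_total p q with h1 | h1 <;> rcases le_total q r with h2 | h2 <;>
    rcases le_total p r with h3 | h3
  all_goals first
    | exact (le_of_eq (by ring)).trans (key (x - p) x y z p q r le_rfl (by omega) (by omega) (by omega) (by omega) (by omega))
    | exact (le_of_eq (by ring)).trans (key (x - p) x y z p r q le_rfl (by omega) (by omega) (by omega) (by omega) (by omega))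
    | exact (le_of_eq (by ring)).trans (key (x - q) x y z q p r le_rfl (by omega) (by omega) (by omega) (by omega) (by omega))
    | exact (le_of_eq (by ring)).trans (key (x - q) x y z q r p le_rfl (by omega) (by omega) (by omega) (by omega) (by omega))
    | exact (le_of_eq (by ring)).trans (key (x - r) x y z r p q le_rfl (by omega) (by omega) (by omega) (by omega) (by omega))
    | exact (le_of_eq (by ring)).trans (key (x - r) x y z r q p le_rfl (by omega) (by omega) (by omega) (by omega) (by omega))

lemma sandwich (n x y z w q r : ℕ) (A B : ℝ)
    (hA : A = (x:ℝ)^2 + (y:ℝ)^2 + (z:ℝ)^2 - x*y - y*z - z*x)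
    (hB : B = (w:ℝ)^2 + (q:ℝ)^2 + (r:ℝ)^2 - w*q - q*r - r*w)
    (ha : x + y + z = n) (hb : w + q + r = n)
    (h1 : y ≤ x) (h2 : z ≤ y)
    (hR : B < (1/4) * A) : w ≤ x ∧ z ≤ w := by
  have han : (x:ℝ) + y + z = n := by exact_mod_cast ha
  have hbn : (w:ℝ) + q + r = n := by exact_mod_cast hb
  have h1' : (y:ℝ) ≤ x := by exact_mod_cast h1
  have h2' : (z:ℝ) ≤ y := by exact_mod_cast h2
  have hw : (3*(w:ℝ) - n)^2 ≤ 4 * B := by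
    rw [hB]; nlinarith [sq_nonneg ((q:ℝ) - r)]
  have hax : A ≤ (3*(x:ℝ) - n)^2 := by
    rw [hA]
    nlinarith [mul_nonneg (sub_nonneg.2 h1') (sub_nonneg.2 (h2'.trans h1'))]
  have haz : A ≤ ((n:ℝ) - 3*z)^2 := by
    rw [hA]
    nlinarith [mul_nonneg (sub_nonneg.2 (h2'.trans h1')) (sub_nonneg.2 h2')]
  have hxn : (n:ℝ) ≤ 3*x := by linarith
  have hzn : 3*(z:ℝ) ≤ n := by linarith
  constructor
  · have hlt : (w:ℝ) ≤ x := by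
      by_contra hcon
      push_neg at hcon
      have e2 : (3*(x:ℝ) - n)^2 ≤ (3*(w:ℝ) - n)^2 :=
        pow_le_pow_left₀ (by linarith) (by linarith) 2
      linarith
    exact_mod_cast hlt
  · have hlt : (z:ℝ) ≤ w := by
      by_contra hcon
      push_neg at hcon
      have e2 : ((n:ℝ) - 3*z)^2 ≤ (3*(w:ℝ) - n)^2 := by
        have h5 : ((n:ℝ) - 3*z)^2 ≤ ((n:ℝ) - 3*w)^2 :=
          pow_le_pow_left₀ (by linarith) (by linarith) 2
        calc ((n:ℝ) - 3*z)^2 ≤ ((n:ℝ) - 3*w)^2 := h5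
          _ = (3*(w:ℝ) - n)^2 := by ring
      linarith
    exact_mod_cast hlt

lemma main_nat (n x y z p q r : ℕ) (A B : ℝ)
    (hA : A = (x:ℝ)^2 + (y:ℝ)^2 + (z:ℝ)^2 - x*y - y*z - z*x)
    (hB : B = (p:ℝ)^2 + (q:ℝ)^2 + (r:ℝ)^2 - p*q - q*r - r*p)
    (ha : x + y + z = n) (hb : p + q + r = n)
    (h1 : y ≤ x) (h2 : z ≤ y)
    (hR : B < (1/4) * A) :
    p.factorial * q.factorial * r.factorial ≤ x.factorial * y.factorial * z.factorial := by
  obtain ⟨c1, c2⟩ := sandwich n x y z p q r A B hA hB ha hb h1 h2 hR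
  obtain ⟨c3, c4⟩ := sandwich n x y z q r p A B hA (by rw [hB]; ring) ha (by omega) h1 h2 hR
  obtain ⟨c5, c6⟩ := sandwich n x y z r p q A B hA (by rw [hB]; ring) ha (by omega) h1 h2 hR
  exact key2 x y z p q r (by omega) c1 c3 c5 c2 c4 c6

/-- **Monotonicity of trinomial point probabilities in the displacement** (Lemma 3.9):
if `a₁ + a₂ + a₃ = b₁ + b₂ + b₃ = n` and the displacement `b₁ + b₂τ + b₃τ²` is less than
half of the displacement `a₁ + a₂τ + a₃τ²` in modulus, then
`n!/(b₁!b₂!b₃!) ≥ n!/(a₁!a₂!a₃!)`. -/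
theorem trinomial_monotone_in_displacement
    (n : ℕ) (hn : 1 ≤ n) (a₁ a₂ a₃ b₁ b₂ b₃ : ℕ)
    (ha : a₁ + a₂ + a₃ = n) (hb : b₁ + b₂ + b₃ = n)
    (hlt : ‖(b₁ : ℂ) + (b₂ : ℂ) * triTau + (b₃ : ℂ) * triTau ^ 2‖
        < (1 / 2) * ‖(a₁ : ℂ) + (a₂ : ℂ) * triTau + (a₃ : ℂ) * triTau ^ 2‖) :
    (n.factorial : ℝ) / ((a₁.factorial : ℝ) * a₂.factorial * a₃.factorial)
      ≤ (n.factorial : ℝ) / ((b₁.factorial : ℝ) * b₂.factorial * b₃.factorial) := by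
  have hR : ((b₁:ℝ)^2 + (b₂:ℝ)^2 + (b₃:ℝ)^2 - b₁*b₂ - b₂*b₃ - b₃*b₁)
      < (1/4) * ((a₁:ℝ)^2 + (a₂:ℝ)^2 + (a₃:ℝ)^2 - a₁*a₂ - a₂*a₃ - a₃*a₁) := by
    have h2 := pow_lt_pow_left₀ hlt (norm_nonneg _) two_ne_zero
    rw [mul_pow, absq, absq] at h2
    nlinarith [h2]
  have hfac : b₁.factorial * b₂.factorial * b₃.factorial
      ≤ a₁.factorial * a₂.factorial * a₃.factorial := by
    rcases le_total a₁ a₂ with h1 | h1 <;> rcases le_total a₂ a₃ with h2 | h2 <;>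
      rcases le_total a₁ a₃ with h3 | h3
    all_goals first
      | exact (main_nat n a₁ a₂ a₃ b₁ b₂ b₃ _ _ (by ring) (by ring) (by omega) hb (by omega) (by omega) hR).trans (le_of_eq (by ring))
      | exact (main_nat n a₁ a₃ a₂ b₁ b₂ b₃ _ _ (by ring) (by ring) (by omega) hb (by omega) (by omega) hR).trans (le_of_eq (by ring))
      | exact (main_nat n a₂ a₁ a₃ b₁ b₂ b₃ _ _ (by ring) (by ring) (by omega) hb (by omega) (by omega) hR).trans (le_of_eq (by ring))
      | exact (main_nat n a₂ a₃ a₁ b₁ b₂ b₃ _ _ (by ring) (by ring) (by omega) hb (by omega) (by omega) hR).trans (le_of_eq (by ring))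
      | exact (main_nat n a₃ a₁ a₂ b₁ b₂ b₃ _ _ (by ring) (by ring) (by omega) hb (by omega) (by omega) hR).trans (le_of_eq (by ring))
      | exact (main_nat n a₃ a₂ a₁ b₁ b₂ b₃ _ _ (by ring) (by ring) (by omega) hb (by omega) (by omega) hR).trans (le_of_eq (by ring))
  have hfac' : ((b₁.factorial : ℝ) * b₂.factorial * b₃.factorial)
      ≤ ((a₁.factorial : ℝ) * a₂.factorial * a₃.factorial) := by exact_mod_cast hfac
  have hpos : (0:ℝ) < (b₁.factorial : ℝ) * b₂.factorial * b₃.factorial := by positivity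
  have hnn : (0:ℝ) ≤ (n.factorial : ℝ) := by positivity
  exact div_le_div_of_nonneg_left hnn hpos hfac'
end

section
/- A short Brownian bridge between interior points stays in the domain (Lemma 4.6 of the paper, first assertion): Let Ω ⊆ ℂ be an open set and let x, y ∈ Ω be such that the straight line segment from x to y is contained in Ω. Let W be a standard planar Brownian motion started at 0, and for t > 0 define the Brownian bridge from x to y of duration t by b_s = x + (y − x)·(s/t) + W_s − (s/t)·W_t for s ∈ [0, t]. Then P( for all s ∈ [0, t], b_s ∈ Ω ) → 1 as t → 0⁺. -/
open MeasureTheory ProbabilityTheory Filter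

/-- A standard planar Brownian motion started at `x`: `X₀ = x` a.s., a.s. continuous
sample paths on `[0, ∞)`, independent increments, and for `0 ≤ s ≤ t` the increment
`X_t - X_s` has independent centered real Gaussian real and imaginary parts of
variance `t - s`. -/
structure IsPlanarBrownianMotion {Ω : Type} [MeasurableSpace Ω] (P : Measure Ω)
    (X : ℝ → Ω → ℂ) (x : ℂ) : Prop where
  start : ∀ᵐ ω ∂P, X 0 ω = x
  cont : ∀ᵐ ω ∂P, ContinuousOn (fun t => X t ω) (Set.Ici 0)
  indep_incr : ∀ (n : ℕ) (t : ℕ → ℝ), (∀ i, 0 ≤ t i) → Monotone t →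
    iIndepFun
      (fun i : Fin n => fun ω => X (t (i + 1)) ω - X (t i) ω) P
  incr_re : ∀ s t : ℝ, 0 ≤ s → s ≤ t →
    P.map (fun ω => (X t ω - X s ω).re) = gaussianReal 0 (Real.toNNReal (t - s))
  incr_im : ∀ s t : ℝ, 0 ≤ s → s ≤ t →
    P.map (fun ω => (X t ω - X s ω).im) = gaussianReal 0 (Real.toNNReal (t - s))
  incr_indep : ∀ s t : ℝ, 0 ≤ s → s ≤ t →
    IndepFun (fun ω => (X t ω - X s ω).re) (fun ω => (X t ω - X s ω).im) P

/-- **A short Brownian bridge between interior points stays in the domain**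
(Lemma 4.6, first assertion): if the segment from `x` to `y` lies in the open set `D`,
then the Brownian bridge `b_s = x + (y-x)(s/t) + W_s - (s/t)W_t` from `x` to `y` of
duration `t` stays in `D` on all of `[0, t]` with probability tending to `1` as
`t → 0⁺`. -/
theorem brownian_bridge_stays_in_domain
    {Ω : Type} [MeasurableSpace Ω] (P : Measure Ω) [IsProbabilityMeasure P]
    (D : Set ℂ) (hD : IsOpen D) (x y : ℂ) (hx : x ∈ D) (hy : y ∈ D)
    (hseg : segment ℝ x y ⊆ D)
    (W : ℝ → Ω → ℂ) (hW : IsPlanarBrownianMotion P W 0) :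
    Tendsto
      (fun t : ℝ => P {ω | ∀ s ∈ Set.Icc (0 : ℝ) t,
        x + ((s / t : ℝ) : ℂ) * (y - x) + W s ω - ((s / t : ℝ) : ℂ) * W t ω ∈ D})
      (nhdsWithin 0 (Set.Ioi 0)) (nhds 1) := by
  -- Choose ε > 0 with the ε-thickening of the segment inside D
  have hcomp : IsCompact (segment ℝ x y) := by
    rw [segment_eq_image' ℝ x y]
    exact isCompact_Icc.image (by continuity)
  obtain ⟨ε, hε, hth⟩ := hcomp.exists_thickening_subset_open hD hseg
  -- Good sample paths
  set G : Set Ω := {ω | ContinuousOn (fun t => W t ω) (Set.Ici 0) ∧ W 0 ω = 0} with hGdef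
  have hGae : ∀ᵐ ω ∂P, ω ∈ G := hW.cont.and hW.start
  have hGone : P G = 1 := by
    have h0 : P Gᶜ = 0 := by
      have := hGae
      rwa [MeasureTheory.ae_iff] at this
    have h1 : (1 : ENNReal) ≤ P G + P Gᶜ := by
      have : P Set.univ ≤ P (G ∪ Gᶜ) := measure_mono (by simp)
      simpa [measure_univ] using this.trans (measure_union_le _ _)
    rw [h0, add_zero] at h1
    exact le_antisymm prob_le_one h1
  -- The auxiliary events
  set A : ℝ → Set Ω := fun t => G ∩ {ω | ∀ s ∈ Set.Icc (0:ℝ) t, ‖W s ω‖ < ε / 2} with hAdef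
  have hAanti : Antitone A := by
    intro t₁ t₂ h
    exact Set.inter_subset_inter_right _ (fun ω hω s hs =>
      hω s ⟨hs.1, hs.2.trans h⟩)
  -- A t is contained in the event in question, for t > 0
  have hsub : ∀ t : ℝ, 0 < t → A t ⊆ {ω | ∀ s ∈ Set.Icc (0 : ℝ) t,
      x + ((s / t : ℝ) : ℂ) * (y - x) + W s ω - ((s / t : ℝ) : ℂ) * W t ω ∈ D} := by
    intro t ht ω hω s hs
    have hst0 : 0 ≤ s / t := div_nonneg hs.1 ht.le
    have hst1 : s / t ≤ 1 := (div_le_one ht).2 hs.2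
    have hseg' : x + ((s / t : ℝ) : ℂ) * (y - x) ∈ segment ℝ x y := by
      rw [segment_eq_image' ℝ x y]
      exact ⟨s / t, ⟨hst0, hst1⟩, by simp [Complex.real_smul]⟩
    have hWs : ‖W s ω‖ < ε / 2 := hω.2 s hs
    have hWt : ‖W t ω‖ < ε / 2 := hω.2 t ⟨ht.le, le_refl t⟩
    have hdist : ‖W s ω - ((s / t : ℝ) : ℂ) * W t ω‖ < ε := by
      calc ‖W s ω - ((s / t : ℝ) : ℂ) * W t ω‖
          ≤ ‖W s ω‖ + ‖((s / t : ℝ) : ℂ) * W t ω‖ := norm_sub_le _ _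
        _ = ‖W s ω‖ + (s / t) * ‖W t ω‖ := by
            rw [norm_mul, Complex.norm_real, Real.norm_of_nonneg hst0]
        _ ≤ ‖W s ω‖ + 1 * ‖W t ω‖ := by
            gcongr
        _ < ε / 2 + ε / 2 := by rw [one_mul]; exact add_lt_add hWs hWt
        _ = ε := by ring
    apply hth
    rw [Metric.mem_thickening_iff]
    refine ⟨x + ((s / t : ℝ) : ℂ) * (y - x), hseg', ?_⟩
    rw [Complex.dist_eq]
    convert hdist using 2
    ring
  -- Good paths eventually have small sup norm
  have hunion : G ⊆ ⋃ n : ℕ, A (1 / (n + 1)) := by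
    intro ω hω
    have hc : ContinuousWithinAt (fun t => W t ω) (Set.Ici 0) 0 :=
      hω.1 0 (Set.self_mem_Ici)
    rw [Metric.continuousWithinAt_iff] at hc
    obtain ⟨δ, hδ, hball⟩ := hc (ε / 2) (by positivity)
    obtain ⟨n, hn⟩ := exists_nat_one_div_lt hδ
    refine Set.mem_iUnion.2 ⟨n, hω, fun s hs => ?_⟩
    have hsδ : dist s 0 < δ := by
      rw [Real.dist_eq, sub_zero, abs_of_nonneg hs.1]
      exact lt_of_le_of_lt hs.2 hn
    have := hball hs.1 hsδ
    rwa [dist_eq_norm, hω.2, sub_zero] at this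
  -- The measures of A (1/(n+1)) tend to 1
  have hmono : Monotone (fun n : ℕ => A (1 / (n + 1))) := by
    intro m n hmn
    apply hAanti
    apply one_div_le_one_div_of_le (by positivity)
    have : (m:ℝ) ≤ n := Nat.cast_le.2 hmn
    linarith
  have hiSup : ⨆ n : ℕ, P (A (1 / (n + 1))) = 1 := by
    rw [← hmono.measure_iUnion]
    refine le_antisymm prob_le_one ?_
    calc (1 : ENNReal) = P G := hGone.symm
      _ ≤ P (⋃ n : ℕ, A (1 / (n + 1))) := measure_mono hunion
  -- Conclude by squeezing
  rw [tendsto_order]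
  constructor
  · intro a ha
    have : a < ⨆ n : ℕ, P (A (1 / (n + 1))) := hiSup ▸ ha
    obtain ⟨n, hn⟩ := lt_iSup_iff.1 this
    have hmem : Set.Ioo (0:ℝ) (1 / (n + 1)) ∈ nhdsWithin (0:ℝ) (Set.Ioi 0) := by
      apply Ioo_mem_nhdsGT_of_mem
      constructor
      · exact le_refl 0
      · positivity
    filter_upwards [hmem] with t ht
    calc a < P (A (1 / (n + 1))) := hn
      _ ≤ P (A t) := measure_mono (hAanti ht.2.le)
      _ ≤ _ := measure_mono (hsub t ht.1)
  · intro b hb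
    filter_upwards with t
    exact lt_of_le_of_lt prob_le_one hb
end
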